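/- Let I be a nonempty index set and (μ_i)_{i∈I} a family of Borel probability measures on ℝ^d such that lim_{n→∞} sup_{i∈I} μ_i({x : |x| > n}) = 0. Then there exists a twice continuously differentiable function ψ : ℝ → ℝ such that on [0,∞): ψ ≥ 0, ψ(0) = 0, 0 < ψ' ≤ 1, −2 ≤ ψ'' ≤ 0, ψ(r) → ∞ as r → ∞, and moreover sup_{i∈I} ∫_{ℝ^d} ψ(log(1+|x|²)) μ_i(dx) < ∞. -/

import Mathlib

open MeasureTheory Filter
open scoped ENNReal Topology
noncomputable section

private def Phi (x : ℝ) : ℝ := Real.log (1 + Real.exp (4*x)) / 4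
private def Sig (x : ℝ) : ℝ := Real.exp (4*x) / (1 + Real.exp (4*x))
private def Tau (x : ℝ) : ℝ := 4 * Real.exp (4*x) / (1 + Real.exp (4*x))^2

private lemma one_add_exp_pos (x : ℝ) : 0 < 1 + Real.exp (4*x) := by positivity

private lemma hasDerivAt_Phi (x : ℝ) : HasDerivAt Phi (Sig x) x := by
  have h1 : HasDerivAt (fun x : ℝ => 4*x) 4 x := by
    simpa using (hasDerivAt_id x).const_mul (4:ℝ)
  have h2 : HasDerivAt (fun x : ℝ => 1 + Real.exp (4*x)) (Real.exp (4*x) * 4) x :=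
    ((Real.hasDerivAt_exp (4*x)).comp x h1).const_add 1
  have h3 : HasDerivAt (fun x : ℝ => Real.log (1 + Real.exp (4*x)))
      ((Real.exp (4*x) * 4) / (1 + Real.exp (4*x))) x := h2.log (one_add_exp_pos x).ne'
  have := h3.div_const 4
  refine this.congr_deriv ?_
  unfold Sig
  field_simp

private lemma hasDerivAt_Sig (x : ℝ) : HasDerivAt Sig (Tau x) x := by
  have h1 : HasDerivAt (fun x : ℝ => 4*x) 4 x := by
    simpa using (hasDerivAt_id x).const_mul (4:ℝ)
  have he : HasDerivAt (fun x : ℝ => Real.exp (4*x)) (Real.exp (4*x) * 4) x :=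
    (Real.hasDerivAt_exp (4*x)).comp x h1
  have h2 : HasDerivAt (fun x : ℝ => 1 + Real.exp (4*x)) (Real.exp (4*x) * 4) x :=
    he.const_add 1
  have := he.div h2 (one_add_exp_pos x).ne'
  refine this.congr_deriv ?_
  unfold Tau
  field_simp
  ring

private lemma Sig_pos (x : ℝ) : 0 < Sig x := by
  unfold Sig; positivity

private lemma Sig_le_one (x : ℝ) : Sig x ≤ 1 := by
  unfold Sig
  rw [div_le_one (one_add_exp_pos x)]
  linarith

private lemma half_le_Sig {x : ℝ} (hx : 0 ≤ x) : 1/2 ≤ Sig x := by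
  unfold Sig
  rw [div_le_div_iff₀ (by norm_num) (one_add_exp_pos x)]
  have : 1 ≤ Real.exp (4*x) := Real.one_le_exp (by linarith)
  linarith

private lemma Tau_nonneg (x : ℝ) : 0 ≤ Tau x := by unfold Tau; positivity

private lemma Tau_le_one (x : ℝ) : Tau x ≤ 1 := by
  unfold Tau
  rw [div_le_one (by positivity)]
  have h := sq_nonneg (1 - Real.exp (4*x))
  nlinarith [Real.exp_pos (4*x)]

private lemma continuous_Tau : Continuous Tau := by
  unfold Tau
  fun_prop (disch := intro x; positivity)

private lemma Phi_pos (x : ℝ) : 0 < Phi x := by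
  unfold Phi
  have : (0:ℝ) < Real.log (1 + Real.exp (4*x)) :=
    Real.log_pos (by linarith [Real.exp_pos (4*x)])
  linarith

private lemma Phi_mono : Monotone Phi := by
  intro x y hxy
  unfold Phi
  have : Real.exp (4*x) ≤ Real.exp (4*y) := Real.exp_le_exp.2 (by linarith)
  have h := Real.log_le_log (one_add_exp_pos x) (show 1+Real.exp (4*x) ≤ 1+Real.exp (4*y) by linarith)
  linarith

private lemma le_Phi (x : ℝ) : x ≤ Phi x := by
  unfold Phi
  have : Real.exp (4*x) ≤ 1 + Real.exp (4*x) := by linarith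
  have h := Real.log_le_log (Real.exp_pos (4*x)) this
  rw [Real.log_exp] at h
  linarith

private lemma Phi_le {x : ℝ} (hx : 0 ≤ x) : Phi x ≤ x + 1/4 := by
  unfold Phi
  have key : Real.log (1 + Real.exp (4*x)) = 4*x + Real.log (1 + Real.exp (-(4*x))) := by
    rw [← Real.log_exp (4*x), ← Real.log_mul (Real.exp_pos (4*x)).ne' (by positivity)]
    rw [Real.log_exp]
    congr 1
    rw [mul_add, mul_one, ← Real.exp_add]
    ring_nf
    rw [Real.exp_zero]
    ring
  have h2 : Real.log (1 + Real.exp (-(4*x))) ≤ Real.exp (-(4*x)) := by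
    have := Real.log_le_sub_one_of_pos (x := 1 + Real.exp (-(4*x))) (by positivity)
    linarith
  have h3 : Real.exp (-(4*x)) ≤ 1 := Real.exp_le_one_iff.2 (by linarith)
  rw [key]
  linarith

private lemma Phi_sub_le {x t : ℝ} (ht : 0 ≤ t) : Phi x - Phi (x - t) ≤ t := by
  unfold Phi
  have h1 : 1 + Real.exp (4*x) ≤ Real.exp (4*t) * (1 + Real.exp (4*(x-t))) := by
    have e1 : Real.exp (4*t) * Real.exp (4*(x-t)) = Real.exp (4*x) := by
      rw [← Real.exp_add]; ring_nf
    have : (1:ℝ) ≤ Real.exp (4*t) := Real.one_le_exp (by linarith)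
    nlinarith [Real.exp_pos (4*(x-t))]
  have h2 := Real.log_le_log (one_add_exp_pos x) h1
  rw [Real.log_mul (Real.exp_pos _).ne' (one_add_exp_pos (x-t)).ne', Real.log_exp] at h2
  linarith

private lemma key (s : ℕ → ℝ) (hs0 : s 0 = 0) (hgap : ∀ k, s k + 1 ≤ s (k+1)) :
    ∃ ψ : ℝ → ℝ, ContDiff ℝ 2 ψ ∧ (∀ r : ℝ, 0 ≤ r → 0 ≤ ψ r) ∧ ψ 0 = 0 ∧
      (∀ r : ℝ, 0 < deriv ψ r ∧ deriv ψ r ≤ 1) ∧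
      (∀ r : ℝ, -2 ≤ deriv (deriv ψ) r ∧ deriv (deriv ψ) r ≤ 0) ∧
      Tendsto ψ atTop atTop ∧ Monotone ψ ∧
      (∀ n : ℕ, ∀ y : ℝ, y ≤ s n → ψ y ≤ n + 1/4) := by
  have hmono : Monotone s := monotone_nat_of_le_succ (fun k => by linarith [hgap k])
  have hs_nonneg : ∀ k, 0 ≤ s k := fun k => hs0 ▸ hmono (Nat.zero_le k)
  have hsk : ∀ k : ℕ, (k:ℝ) ≤ s k := by
    intro k
    induction k with
    | zero => simp [hs0]
    | succ n ih => push_cast; linarith [hgap n]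
  set v : ℕ → ℝ := fun k => (1 + s (k+1))⁻¹ with hv
  set d : ℕ → ℝ := fun k => v k - v (k+1) with hd
  set b : ℕ → ℝ := fun k => s (k+1) with hb
  have hspos : ∀ k, (0:ℝ) < 1 + s k := fun k => by linarith [hs_nonneg k]
  have hvpos : ∀ k, 0 < v k := fun k => inv_pos.2 (hspos (k+1))
  have hvle1 : ∀ k, v k ≤ 1 := fun k => by
    rw [hv]
    exact inv_le_one_of_one_le₀ (by linarith [hs_nonneg (k+1)])
  have hvanti : ∀ k, v (k+1) < v k := by
    intro k
    rw [hv]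
    have h1 := hspos (k+1)
    have h2 := hgap (k+1)
    exact inv_strictAnti₀ h1 (by linarith)
  have hdpos : ∀ k, 0 < d k := fun k => sub_pos.2 (hvanti k)
  have hdnonneg : ∀ k, 0 ≤ d k := fun k => (hdpos k).le
  -- limit of v
  have hvlim : Tendsto v atTop (𝓝 0) := by
    have hvbound : ∀ k : ℕ, v k ≤ 1 / ((k:ℝ)+1) := by
      intro k
      show (1 + s (k+1))⁻¹ ≤ 1/((k:ℝ)+1)
      rw [one_div]
      apply inv_anti₀ (by positivity)
      have := hsk (k+1)
      push_cast at this ⊢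
      linarith
    exact tendsto_of_tendsto_of_tendsto_of_le_of_le tendsto_const_nhds
      tendsto_one_div_add_atTop_nhds_zero_nat (fun k => (hvpos k).le) hvbound
  -- partial sums and summability
  have hpartial : ∀ n, ∑ k ∈ Finset.range n, d k = v 0 - v n := fun n =>
    Finset.sum_range_sub' v n
  have Sd : Summable d := by
    apply summable_of_sum_range_le (c := v 0) hdnonneg
    intro n
    rw [hpartial n]
    linarith [hvpos n]
  have Hd : HasSum d (v 0) := by
    have h1 := Sd.hasSum.tendsto_sum_nat
    have h2 : Tendsto (fun n => ∑ k ∈ Finset.range n, d k) atTop (𝓝 (v 0)) := by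
      simp only [hpartial]
      simpa using tendsto_const_nhds.sub hvlim
    exact tendsto_nhds_unique h1 h2 ▸ Sd.hasSum
  have Htail : ∀ j, HasSum (fun k => if j ≤ k then d k else 0) (v j) := by
    intro j
    set f : ℕ → ℝ := fun k => if j ≤ k then d k else 0 with hf
    have hshift : (fun n => f (n + j)) = fun n => d (n + j) := by
      funext n; simp [hf, Nat.le_add_left]
    have hps : ∀ n, ∑ k ∈ Finset.range n, d (k + j) = v j - v (n + j) := by
      intro n
      have : ∀ k, d (k + j) = (fun i => v (i + j)) k - (fun i => v (i + j)) (k+1) := by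
        intro k
        simp only [hd]
        congr 2
        omega
      calc ∑ k ∈ Finset.range n, d (k + j)
          = ∑ k ∈ Finset.range n, ((fun i => v (i + j)) k - (fun i => v (i + j)) (k+1)) :=
            Finset.sum_congr rfl (fun k _ => this k)
        _ = v (0 + j) - v (n + j) := Finset.sum_range_sub' (fun i => v (i + j)) n
        _ = v j - v (n + j) := by rw [Nat.zero_add]
    have Stail : Summable (fun n => d (n + j)) := (summable_nat_add_iff j).2 Sd
    have Htail' : HasSum (fun n => d (n + j)) (v j) := by
      have h1 := Stail.hasSum.tendsto_sum_nat
      have h2 : Tendsto (fun n => ∑ k ∈ Finset.range n, d (k + j)) atTop (𝓝 (v j)) := by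
        simp only [hps]
        have : Tendsto (fun n => v (n + j)) atTop (𝓝 0) :=
          hvlim.comp (tendsto_add_atTop_nat j)
        simpa using tendsto_const_nhds.sub this
      exact tendsto_nhds_unique h1 h2 ▸ Stail.hasSum
    have hzero : ∑ k ∈ Finset.range j, f k = 0 :=
      Finset.sum_eq_zero (fun k hk => by
        have hk' := Finset.mem_range.1 hk
        show (if j ≤ k then d k else 0) = 0
        exact if_neg (Nat.not_le.2 hk'))
    have := (hasSum_nat_add_iff (f := f) j).1 (by rwa [hshift])
    rw [hzero, add_zero] at this
    exact this
    -- ψ and its derivatives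
  set F : ℕ → ℝ → ℝ := fun k t => d k * (Phi (b k) - Phi (b k - t)) with hF
  set ψ : ℝ → ℝ := fun t => ∑' k, F k t with hψdef
  set gf : ℝ → ℝ := fun t => ∑' k, d k * Sig (b k - t) with hgf
  set hf2 : ℝ → ℝ := fun t => ∑' k, -(d k * Tau (b k - t)) with hhf2
  have hFderiv : ∀ (k : ℕ) (t : ℝ), HasDerivAt (fun t => F k t) (d k * Sig (b k - t)) t := by
    intro k t
    have hinner : HasDerivAt (fun t : ℝ => b k - t) (-1) t := by
      simpa using (hasDerivAt_id t).const_sub (b k)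
    have h1 : HasDerivAt (fun t : ℝ => Phi (b k - t)) (Sig (b k - t) * (-1)) t :=
      (hasDerivAt_Phi (b k - t)).comp t hinner
    have h2 : HasDerivAt (fun t : ℝ => Phi (b k) - Phi (b k - t)) (Sig (b k - t)) t := by
      simpa using h1.const_sub (Phi (b k))
    simpa [hF] using h2.const_mul (d k)
  have hGderiv : ∀ (k : ℕ) (t : ℝ),
      HasDerivAt (fun t => d k * Sig (b k - t)) (-(d k * Tau (b k - t))) t := by
    intro k t
    have hinner : HasDerivAt (fun t : ℝ => b k - t) (-1) t := by
      simpa using (hasDerivAt_id t).const_sub (b k)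
    have h1 : HasDerivAt (fun t : ℝ => Sig (b k - t)) (Tau (b k - t) * (-1)) t :=
      (hasDerivAt_Sig (b k - t)).comp t hinner
    have := h1.const_mul (d k)
    refine this.congr_deriv ?_
    ring
  have hgbound : ∀ (k : ℕ) (t : ℝ), ‖d k * Sig (b k - t)‖ ≤ d k := by
    intro k t
    rw [Real.norm_eq_abs, abs_of_nonneg (mul_nonneg (hdnonneg k) (Sig_pos _).le)]
    exact mul_le_of_le_one_right (hdnonneg k) (Sig_le_one _)
  have hτbound : ∀ (k : ℕ) (t : ℝ), ‖-(d k * Tau (b k - t))‖ ≤ d k := by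
    intro k t
    rw [norm_neg, Real.norm_eq_abs, abs_of_nonneg (mul_nonneg (hdnonneg k) (Tau_nonneg _))]
    exact mul_le_of_le_one_right (hdnonneg k) (Tau_le_one _)
  have SF0 : Summable (fun k => F k 0) := by
    have hz : (fun k => F k 0) = fun _ => (0:ℝ) := by
      funext k; simp [hF]
    rw [hz]; exact summable_zero
  have Sg : ∀ t : ℝ, Summable (fun k => d k * Sig (b k - t)) := fun t =>
    Summable.of_nonneg_of_le (fun k => mul_nonneg (hdnonneg k) (Sig_pos _).le)
      (fun k => mul_le_of_le_one_right (hdnonneg k) (Sig_le_one _)) Sd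
  have Hψd : ∀ t, HasDerivAt ψ (gf t) t := fun t =>
    hasDerivAt_tsum Sd hFderiv hgbound SF0 t
  have Hgd : ∀ t, HasDerivAt gf (hf2 t) t := fun t =>
    hasDerivAt_tsum Sd hGderiv hτbound (Sg 0) t
  have hderiv1 : deriv ψ = gf := funext fun t => (Hψd t).deriv
  have hderiv2 : deriv gf = hf2 := funext fun t => (Hgd t).deriv
  have hcont_hf2 : Continuous hf2 :=
    continuous_tsum
      (fun k => ((continuous_const.mul (continuous_Tau.comp (continuous_const.sub continuous_id))).neg))
      Sd hτbound
  have hψC2 : ContDiff ℝ 2 ψ := by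
    rw [show (2 : WithTop ℕ∞) = 1 + 1 by norm_num, contDiff_succ_iff_deriv]
    refine ⟨fun t => (Hψd t).differentiableAt, by simp, ?_⟩
    rw [hderiv1, contDiff_one_iff_deriv]
    exact ⟨fun t => (Hgd t).differentiableAt, hderiv2 ▸ hcont_hf2⟩
  -- first derivative bounds
  have hgf_pos : ∀ t : ℝ, 0 < gf t := by
    intro t
    exact Summable.tsum_pos (Sg t) (fun k => mul_nonneg (hdnonneg k) (Sig_pos _).le) 0
      (mul_pos (hdpos 0) (Sig_pos _))
  have htsum_d : ∑' k, d k = v 0 := Hd.tsum_eq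
  have hgf_le : ∀ t : ℝ, gf t ≤ 1 := by
    intro t
    have h1 : gf t ≤ ∑' k, d k :=
      Summable.tsum_le_tsum (fun k => mul_le_of_le_one_right (hdnonneg k) (Sig_le_one _)) (Sg t) Sd
    rw [htsum_d] at h1
    exact h1.trans (hvle1 0)
  -- second derivative bounds
  have SτS : ∀ t : ℝ, Summable (fun k => d k * Tau (b k - t)) := fun t =>
    Summable.of_nonneg_of_le (fun k => mul_nonneg (hdnonneg k) (Tau_nonneg _))
      (fun k => mul_le_of_le_one_right (hdnonneg k) (Tau_le_one _)) Sd
  have hhf2_le : ∀ t : ℝ, hf2 t ≤ 0 := by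
    intro t
    show (∑' k, -(d k * Tau (b k - t))) ≤ 0
    rw [tsum_neg]
    simp only [neg_nonpos]
    exact tsum_nonneg (fun k => mul_nonneg (hdnonneg k) (Tau_nonneg _))
  have hhf2_ge : ∀ t : ℝ, (-2:ℝ) ≤ hf2 t := by
    intro t
    show (-2:ℝ) ≤ ∑' k, -(d k * Tau (b k - t))
    rw [tsum_neg, neg_le, neg_neg]
    have h1 : ∑' k, d k * Tau (b k - t) ≤ ∑' k, d k :=
      Summable.tsum_le_tsum (fun k => mul_le_of_le_one_right (hdnonneg k) (Tau_le_one _)) (SτS t) Sd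
    rw [htsum_d] at h1
    linarith [hvle1 0]
  -- ψ 0 = 0 and monotonicity
  have hψ0 : ψ 0 = 0 := by
    show (∑' k, F k 0) = 0
    have hz : (fun k => F k 0) = fun _ => (0:ℝ) := by funext k; simp [hF]
    rw [hz, tsum_zero]
  have hψsm : StrictMono ψ := strictMono_of_deriv_pos (fun t => by
    rw [hderiv1]; exact hgf_pos t)
  have hψmono : Monotone ψ := hψsm.monotone
  -- lower bound on gf
  have hgf_lower : ∀ n : ℕ, ∀ t : ℝ, t ≤ s (n+1) → v n / 2 ≤ gf t := by
    intro n t ht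
    have hl : HasSum (fun k => (if n ≤ k then d k else 0) / 2) (v n / 2) := (Htail n).div_const 2
    have hle : ∀ k, (if n ≤ k then d k else 0) / 2 ≤ d k * Sig (b k - t) := by
      intro k
      by_cases hnk : n ≤ k
      · rw [if_pos hnk]
        have hbk : 0 ≤ b k - t := by
          have h1 : s (n+1) ≤ s (k+1) := hmono (by omega)
          have h2 : b k = s (k+1) := rfl
          linarith
        calc d k / 2 = d k * (1/2) := by ring
          _ ≤ d k * Sig (b k - t) := mul_le_mul_of_nonneg_left (half_le_Sig hbk) (hdnonneg k)
      · rw [if_neg hnk, zero_div]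
        exact mul_nonneg (hdnonneg k) (Sig_pos (b k - t)).le
    have h2 := Summable.tsum_le_tsum hle hl.summable (Sg t)
    rw [hl.tsum_eq] at h2
    exact h2
  -- unboundedness via quarter steps
  have hstep4 : ∀ x : ℝ, 0 ≤ x → ∃ y : ℝ, 0 ≤ y ∧ ψ x + 1/4 ≤ ψ y := by
    intro x hx
    set n := ⌈2*x+1⌉₊ with hn
    have hs1 : 2*x + 1 ≤ s (n+1) := by
      have h1 : (2*x+1) ≤ (n:ℝ) := Nat.le_ceil _
      have h2 : (n:ℝ) ≤ s n := hsk n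
      linarith [hgap n]
    have hxs : x ≤ s (n+1) := by linarith
    have hmvt : v n / 2 * (s (n+1) - x) ≤ ψ (s (n+1)) - ψ x :=
      (convex_Iic (s (n+1))).mul_sub_le_image_sub_of_le_deriv
        (fun z _ => (Hψd z).continuousAt.continuousWithinAt)
        (fun z _ => (Hψd z).differentiableAt.differentiableWithinAt)
        (fun z hz => by
          rw [hderiv1]
          exact hgf_lower n z (le_of_lt (by simpa [interior_Iic] using hz)))
        x (Set.mem_Iic.2 hxs) (s (n+1)) (Set.mem_Iic.2 le_rfl) hxs
    have hv1 : v n * (1 + s (n+1)) = 1 := by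
      show (1 + s (n+1))⁻¹ * (1 + s (n+1)) = 1
      exact inv_mul_cancel₀ (hspos (n+1)).ne'
    have h2 : (1 + s (n+1))/2 ≤ s (n+1) - x := by linarith
    have h3 := mul_le_mul_of_nonneg_left h2 (hvpos n).le
    have hq : 1/4 ≤ v n / 2 * (s (n+1) - x) := by nlinarith
    exact ⟨s (n+1), hs_nonneg (n+1), by linarith⟩
  have hup : ∀ j : ℕ, ∃ x, 0 ≤ x ∧ (j:ℝ)/4 ≤ ψ x := by
    intro j
    induction j with
    | zero => exact ⟨0, le_rfl, by simp [hψ0]⟩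
    | succ j ih =>
      obtain ⟨x, hx0, hxψ⟩ := ih
      obtain ⟨y, hy0, hyψ⟩ := hstep4 x hx0
      refine ⟨y, hy0, ?_⟩
      push_cast
      linarith
  -- tendsto atTop
  have hψtop : Tendsto ψ atTop atTop := by
    apply tendsto_atTop_atTop_of_monotone hψmono
    intro C
    obtain ⟨j, hj⟩ : ∃ j : ℕ, 4*C ≤ (j:ℝ) := exists_nat_ge _
    obtain ⟨x, hx0, hxψ⟩ := hup j
    exact ⟨x, by linarith⟩
  -- upper bound: A n ≤ n
  have hminb : ∀ (n k : ℕ), 0 ≤ min (s n) (b k) := fun n k =>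
    le_min (hs_nonneg n) (hs_nonneg (k+1))
  have Smin : ∀ n : ℕ, Summable (fun k => d k * min (s n) (b k)) := fun n =>
    Summable.of_nonneg_of_le (fun k => mul_nonneg (hdnonneg k) (hminb n k))
      (fun k => mul_le_mul_of_nonneg_left (min_le_left _ _) (hdnonneg k)) (Sd.mul_right (s n))
  have hAbound : ∀ n : ℕ, (∑' k, d k * min (s n) (b k)) ≤ (n:ℝ) := by
    intro n
    induction n with
    | zero =>
      have hz : (fun k => d k * min (s 0) (b k)) = fun _ => (0:ℝ) := by
        funext k
        rw [hs0, min_eq_left (hs_nonneg (k+1))]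
        ring
      rw [hz, tsum_zero]
      simp
    | succ n ih =>
      have hite : HasSum (fun k => if n ≤ k then d k * (s (n+1) - s n) else 0)
          (v n * (s (n+1) - s n)) := by
        simpa [ite_mul] using (Htail n).mul_right (s (n+1) - s n)
      have hterm : ∀ k, d k * min (s (n+1)) (b k) ≤
          d k * min (s n) (b k) + (if n ≤ k then d k * (s (n+1) - s n) else 0) := by
        intro k
        by_cases hnk : n ≤ k
        · rw [if_pos hnk]
          have hmin2 : min (s (n+1)) (b k) ≤ min (s n) (b k) + (s (n+1) - s n) := by
            rcases le_total (s n) (b k) with h | h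
            · rw [min_eq_left h]
              linarith [min_le_left (s (n+1)) (b k)]
            · rw [min_eq_right h]
              linarith [min_le_right (s (n+1)) (b k), hgap n]
          calc d k * min (s (n+1)) (b k) ≤ d k * (min (s n) (b k) + (s (n+1) - s n)) :=
                mul_le_mul_of_nonneg_left hmin2 (hdnonneg k)
            _ = d k * min (s n) (b k) + d k * (s (n+1) - s n) := by ring
        · rw [if_neg hnk]
          have hbk : b k ≤ s n := hmono (show k + 1 ≤ n by omega)
          have hbk1 : b k ≤ s (n+1) := hbk.trans (hmono (show n ≤ n+1 by omega))
          rw [min_eq_right hbk, min_eq_right hbk1, add_zero]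
      have hsum_le := Summable.tsum_le_tsum hterm (Smin (n+1)) ((Smin n).add hite.summable)
      rw [Summable.tsum_add (Smin n) hite.summable, hite.tsum_eq] at hsum_le
      have hvd : v n * (s (n+1) - s n) ≤ 1 := by
        have h1 : s (n+1) - s n ≤ 1 + s (n+1) := by linarith [hs_nonneg n]
        have h2 : v n * (s (n+1) - s n) ≤ v n * (1 + s (n+1)) :=
          mul_le_mul_of_nonneg_left h1 (hvpos n).le
        have h3 : v n * (1 + s (n+1)) = 1 := by
          show (1 + s (n+1))⁻¹ * (1 + s (n+1)) = 1
          exact inv_mul_cancel₀ (hspos (n+1)).ne'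
        linarith
      push_cast
      linarith
  -- final upper bound for ψ
  have hUB : ∀ (n : ℕ) (y : ℝ), y ≤ s n → ψ y ≤ n + 1/4 := by
    intro n y hy
    have h1 : ψ y ≤ ψ (s n) := hψmono hy
    have hterm : ∀ k, F k (s n) ≤ d k * min (s n) (b k) + d k / 4 := by
      intro k
      have hub1 : Phi (b k) - Phi (b k - s n) ≤ s n := Phi_sub_le (hs_nonneg n)
      have hub2 : Phi (b k) - Phi (b k - s n) ≤ b k + 1/4 := by
        have := Phi_le (show (0:ℝ) ≤ b k from hs_nonneg (k+1))
        linarith [Phi_pos (b k - s n)]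
      have hmin : Phi (b k) - Phi (b k - s n) ≤ min (s n) (b k) + 1/4 := by
        rcases le_total (s n) (b k) with h | h
        · rw [min_eq_left h]; linarith
        · rw [min_eq_right h]; linarith
      calc F k (s n) = d k * (Phi (b k) - Phi (b k - s n)) := rfl
        _ ≤ d k * (min (s n) (b k) + 1/4) := mul_le_mul_of_nonneg_left hmin (hdnonneg k)
        _ = d k * min (s n) (b k) + d k / 4 := by ring
    have SFn : Summable (fun k => F k (s n)) := by
      apply Summable.of_nonneg_of_le ?_ hterm ((Smin n).add (Sd.div_const 4))
      intro k
      apply mul_nonneg (hdnonneg k)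
      have hm : b k - s n ≤ b k := by linarith [hs_nonneg n]
      linarith [Phi_mono hm]
    have h2 : ψ (s n) ≤ (∑' k, d k * min (s n) (b k)) + ∑' k, d k / 4 := by
      have h := Summable.tsum_le_tsum hterm SFn ((Smin n).add (Sd.div_const 4))
      rw [Summable.tsum_add (Smin n) (Sd.div_const 4)] at h
      exact h
    have h3 : ∑' k, d k / 4 = v 0 / 4 := (Hd.div_const 4).tsum_eq
    rw [h3] at h2
    have h4 := hAbound n
    have h5 := hvle1 0
    linarith
  exact ⟨ψ, hψC2, fun r hr => hψ0 ▸ hψmono hr, hψ0,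
    fun r => ⟨by rw [hderiv1]; exact hgf_pos r, by rw [hderiv1]; exact hgf_le r⟩,
    fun r => ⟨by rw [hderiv1, hderiv2]; exact hhf2_ge r, by rw [hderiv1, hderiv2]; exact hhf2_le r⟩,
    hψtop, hψmono, hUB⟩

/-- For a uniformly tight family `(μ_i)` of probability measures on `ℝ^d` there is a
`C²` function `ψ` with `ψ ≥ 0`, `ψ(0) = 0`, `0 < ψ' ≤ 1`, `−2 ≤ ψ'' ≤ 0` on `[0,∞)`,
`ψ(r) → ∞` as `r → ∞`, and `sup_i ∫ ψ(log(1+|x|²)) μ_i(dx) < ∞`. -/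
theorem exists_uniform_lyapunov_function {d : ℕ} {I : Type*} [Nonempty I]
    (μ : I → Measure (EuclideanSpace ℝ (Fin d)))
    (hμ : ∀ i, IsProbabilityMeasure (μ i))
    (htight : Tendsto (fun n : ℕ => ⨆ i, μ i {x : EuclideanSpace ℝ (Fin d) | (n : ℝ) < ‖x‖})
      atTop (𝓝 0)) :
    ∃ ψ : ℝ → ℝ, ContDiff ℝ 2 ψ ∧
      (∀ r : ℝ, 0 ≤ r → 0 ≤ ψ r) ∧ ψ 0 = 0 ∧
      (∀ r : ℝ, 0 ≤ r → 0 < deriv ψ r ∧ deriv ψ r ≤ 1) ∧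
      (∀ r : ℝ, 0 ≤ r → -2 ≤ deriv (deriv ψ) r ∧ deriv (deriv ψ) r ≤ 0) ∧
      Tendsto ψ atTop atTop ∧
      ∃ M : ℝ, ∀ i,
        (∫⁻ x, ENNReal.ofReal (ψ (Real.log (1 + ‖x‖ ^ 2))) ∂(μ i)) ≤ ENNReal.ofReal M := by
  classical
  -- choose radii from tightness
  have hN : ∀ k : ℕ, ∃ N : ℕ, ∀ n : ℕ, n ≥ N →
      (⨆ i, μ i {x : EuclideanSpace ℝ (Fin d) | (n:ℝ) < ‖x‖}) ≤ (2:ℝ≥0∞)⁻¹ ^ k := by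
    intro k
    have hε : (0:ℝ≥0∞) < 2⁻¹ ^ k := ENNReal.pow_pos (by norm_num) k
    exact eventually_atTop.1 ((ENNReal.tendsto_nhds_zero.1 htight) _ hε)
  choose N hN using hN
  set m : ℕ → ℕ := fun k => Nat.rec 0 (fun k mk => max (N (k+1)) (2*mk + 2)) k with hm
  have hm0 : m 0 = 0 := rfl
  have hmrec : ∀ k, m (k+1) = max (N (k+1)) (2*(m k) + 2) := fun k => rfl
  set s : ℕ → ℝ := fun k => Real.log (1 + (m k:ℝ)^2) with hs
  have hs0 : s 0 = 0 := by simp [hs, hm0]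
  have hgap : ∀ k, s k + 1 ≤ s (k+1) := by
    intro k
    have hmk : 2*(m k) + 2 ≤ m (k+1) := by rw [hmrec]; omega
    have h1 : (0:ℝ) < 1 + (m k:ℝ)^2 := by positivity
    have hsq : 4*(1 + (m k:ℝ)^2) ≤ 1 + (m (k+1):ℝ)^2 := by
      have h2 : (2*(m k)+2 : ℝ) ≤ (m (k+1):ℝ) := by exact_mod_cast hmk
      have h3 : (0:ℝ) ≤ 2*(m k:ℝ)+2 := by positivity
      nlinarith [sq_nonneg (m k:ℝ)]
    have hlog4 : (1:ℝ) ≤ Real.log 4 := by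
      have he : Real.exp 1 ≤ 4 := by
        have := Real.exp_one_lt_d9
        linarith
      calc (1:ℝ) = Real.log (Real.exp 1) := (Real.log_exp 1).symm
        _ ≤ Real.log 4 := Real.log_le_log (Real.exp_pos 1) he
    calc s k + 1 ≤ s k + Real.log 4 := by linarith
      _ = Real.log (4 * (1 + (m k:ℝ)^2)) := by
          rw [Real.log_mul (by norm_num) h1.ne']
          show s k + Real.log 4 = Real.log 4 + s k
          ring
      _ ≤ s (k+1) := Real.log_le_log (by positivity) hsq
  have hsk : ∀ k : ℕ, (k:ℝ) ≤ s k := by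
    intro k
    induction k with
    | zero => simp [hs0]
    | succ n ih => push_cast; linarith [hgap n]
  obtain ⟨ψ, hC2, hnn, h0, hd1, hd2, htop, hmono, hUB⟩ := key s hs0 hgap
  refine ⟨ψ, hC2, hnn, h0, fun r _ => hd1 r, fun r _ => hd2 r, htop, 4, ?_⟩
  intro i
  haveI := hμ i
  set L : EuclideanSpace ℝ (Fin d) → ℝ := fun x => Real.log (1 + ‖x‖^2) with hL
  have hLnn : ∀ x, 0 ≤ L x := fun x => Real.log_nonneg (by
    have : (0:ℝ) ≤ ‖x‖^2 := by positivity
    linarith)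
  have hLmeas : Measurable L := by
    apply Real.measurable_log.comp
    exact (measurable_const.add ((measurable_norm).pow_const 2))
  set T : ℕ → Set (EuclideanSpace ℝ (Fin d)) := fun k => {x | s (k+1) < L x} with hT
  have hTmeas : ∀ k, MeasurableSet (T k) := fun k =>
    measurableSet_lt measurable_const hLmeas
  have hexists : ∀ x, ∃ n : ℕ, L x ≤ s n := by
    intro x
    exact ⟨⌈L x⌉₊, (Nat.le_ceil _).trans (hsk _)⟩
  -- pointwise bound
  have hpt : ∀ x, ENNReal.ofReal (ψ (L x)) ≤
      2 + ∑' k, (T k).indicator (fun _ => (1:ℝ≥0∞)) x := by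
    intro x
    set n := Nat.find (hexists x) with hndef
    have hn : L x ≤ s n := Nat.find_spec (hexists x)
    have hψle : ψ (L x) ≤ (n:ℝ) + 1 := by
      have := hUB n (L x) hn
      linarith
    have h1 : ENNReal.ofReal (ψ (L x)) ≤ (n:ℝ≥0∞) + 1 := by
      calc ENNReal.ofReal (ψ (L x)) ≤ ENNReal.ofReal ((n:ℝ) + 1) :=
            ENNReal.ofReal_le_ofReal hψle
        _ = (n:ℝ≥0∞) + 1 := by
            rw [ENNReal.ofReal_add (by positivity) (by norm_num)]
            simp
    have hcount : ((n-1:ℕ):ℝ≥0∞) ≤ ∑' k, (T k).indicator (fun _ => (1:ℝ≥0∞)) x := by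
      have hsum : ∑ k ∈ Finset.range (n-1), (T k).indicator (fun _ => (1:ℝ≥0∞)) x
          = ((n-1:ℕ):ℝ≥0∞) := by
        have hone : ∀ k ∈ Finset.range (n-1), (T k).indicator (fun _ => (1:ℝ≥0∞)) x = 1 := by
          intro k hk
          have hkj := Finset.mem_range.1 hk
          have hlt : k + 1 < n := by omega
          have hmin := Nat.find_min (hexists x) (show k+1 < Nat.find (hexists x) from
            hndef ▸ hlt)
          have hxT : x ∈ T k := by
            simp only [hT, Set.mem_setOf_eq]
            push_neg at hmin
            exact hmin
          exact Set.indicator_of_mem hxT _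
        rw [Finset.sum_congr rfl hone, Finset.sum_const, Finset.card_range, nsmul_eq_mul,
          mul_one]
      calc ((n-1:ℕ):ℝ≥0∞) = ∑ k ∈ Finset.range (n-1), (T k).indicator (fun _ => (1:ℝ≥0∞)) x :=
            hsum.symm
        _ ≤ _ := ENNReal.sum_le_tsum _
    have h2 : (n:ℝ≥0∞) ≤ 1 + ∑' k, (T k).indicator (fun _ => (1:ℝ≥0∞)) x := by
      have hn1 : (n:ℝ≥0∞) ≤ ((n-1:ℕ):ℝ≥0∞) + 1 := by
        norm_cast
        omega
      calc (n:ℝ≥0∞) ≤ ((n-1:ℕ):ℝ≥0∞) + 1 := hn1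
        _ ≤ (∑' k, (T k).indicator (fun _ => (1:ℝ≥0∞)) x) + 1 := add_le_add_left hcount 1
        _ = 1 + ∑' k, (T k).indicator (fun _ => (1:ℝ≥0∞)) x := add_comm _ _
    calc ENNReal.ofReal (ψ (L x)) ≤ (n:ℝ≥0∞) + 1 := h1
      _ ≤ (1 + ∑' k, (T k).indicator (fun _ => (1:ℝ≥0∞)) x) + 1 := add_le_add_left h2 1
      _ = 2 + ∑' k, (T k).indicator (fun _ => (1:ℝ≥0∞)) x := by ring
  -- tail measure bounds
  have hTbound : ∀ k, μ i (T k) ≤ (2:ℝ≥0∞)⁻¹ ^ (k+1) := by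
    intro k
    have hsub : T k ⊆ {x : EuclideanSpace ℝ (Fin d) | ((m (k+1):ℕ):ℝ) < ‖x‖} := by
      intro x hx
      simp only [hT, Set.mem_setOf_eq] at hx ⊢
      by_contra hcon
      push_neg at hcon
      have hsq : ‖x‖^2 ≤ ((m (k+1):ℕ):ℝ)^2 := by
        apply pow_le_pow_left₀ (norm_nonneg x) hcon
      have : L x ≤ s (k+1) := by
        apply Real.log_le_log (by positivity)
        linarith
      linarith
    calc μ i (T k) ≤ μ i {x : EuclideanSpace ℝ (Fin d) | ((m (k+1):ℕ):ℝ) < ‖x‖} :=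
          measure_mono hsub
      _ ≤ ⨆ i, μ i {x : EuclideanSpace ℝ (Fin d) | ((m (k+1):ℕ):ℝ) < ‖x‖} :=
          le_iSup (fun j => μ j {x : EuclideanSpace ℝ (Fin d) | ((m (k+1):ℕ):ℝ) < ‖x‖}) i
      _ ≤ (2:ℝ≥0∞)⁻¹ ^ (k+1) := hN (k+1) (m (k+1)) (by rw [hmrec]; omega)
  -- integrate
  have hint : (∫⁻ x, ENNReal.ofReal (ψ (L x)) ∂(μ i)) ≤ 4 := by
    calc (∫⁻ x, ENNReal.ofReal (ψ (L x)) ∂(μ i))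
        ≤ ∫⁻ x, (2 + ∑' k, (T k).indicator (fun _ => (1:ℝ≥0∞)) x) ∂(μ i) :=
          lintegral_mono hpt
      _ = 2 + ∫⁻ x, (∑' k, (T k).indicator (fun _ => (1:ℝ≥0∞)) x) ∂(μ i) := by
          rw [lintegral_add_left measurable_const]
          simp [measure_univ]
      _ = 2 + ∑' k, μ i (T k) := by
          rw [lintegral_tsum (μ := μ i) (f := fun k => (T k).indicator (fun _ => (1:ℝ≥0∞)))
            (fun k => (measurable_const.indicator (hTmeas k)).aemeasurable)]
          congr 1
          refine tsum_congr (fun k => ?_)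
          rw [lintegral_indicator (hTmeas k), setLIntegral_one]
      _ ≤ 2 + ∑' k : ℕ, (2:ℝ≥0∞)⁻¹ ^ (k+1) := by
          exact add_le_add_right (ENNReal.tsum_le_tsum hTbound) 2
      _ ≤ 2 + ∑' k : ℕ, (2:ℝ≥0∞)⁻¹ ^ k := by
          apply add_le_add_right
          apply ENNReal.tsum_le_tsum
          intro k
          exact pow_le_pow_of_le_one zero_le (by norm_num) (by omega)
      _ = 2 + 2 := by
          rw [ENNReal.tsum_geometric, ENNReal.one_sub_inv_two, inv_inv]
      _ = 4 := by norm_num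
  calc (∫⁻ x, ENNReal.ofReal (ψ (Real.log (1 + ‖x‖ ^ 2))) ∂(μ i))
      = (∫⁻ x, ENNReal.ofReal (ψ (L x)) ∂(μ i)) := rfl
    _ ≤ 4 := hint
    _ ≤ ENNReal.ofReal 4 := by
        rw [ENNReal.ofReal_ofNat]
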